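/- Let n = 3. Let Y solve Y'(h) = c₃·[ (1/2)·(Y(h)/ω₂)^{1/2} − 1 ]^{3/2} with Y(0) = 2·4·ω₂ = 8ω₂, where c₃ = 4ω₂·(2/(3√3)). Then Y exists for all h ≥ 0, and there exists a constant C > 0 such that h ≤ C·Y(h)^{1/4} for all h ≥ 0. -/

import Mathlib

open Real

noncomputable def t0' : ℝ := Real.sqrt (Real.sqrt 2 - 1) - 1 / Real.sqrt (Real.sqrt 2 - 1)

noncomputable def tf' (h : ℝ) : ℝ := h / (6 * Real.sqrt 3) + t0'

noncomputable def vf' (h : ℝ) : ℝ := (tf' h + Real.sqrt ((tf' h)^2 + 4)) / 2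

noncomputable def Yf' (h : ℝ) : ℝ := 4 * (4 * π) * (1 + (vf' h)^2)^2

lemma sqrt_sq_add_four (t : ℝ) : (Real.sqrt (t^2+4))^2 = t^2+4 :=
  Real.sq_sqrt (by positivity)

lemma vf'_pos (h : ℝ) : 0 < vf' h := by
  have h1 : |tf' h| ≤ Real.sqrt ((tf' h)^2 + 4) := by
    rw [← Real.sqrt_sq_eq_abs]
    exact Real.sqrt_le_sqrt (by nlinarith)
  have h2 : -(tf' h) ≤ |tf' h| := neg_le_abs _
  have h3 : (0:ℝ) < Real.sqrt ((tf' h)^2 + 4) := Real.sqrt_pos.2 (by positivity)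
  unfold vf'
  nlinarith [Real.sq_sqrt (show (0:ℝ) ≤ (tf' h)^2 + 4 by positivity)]

lemma vf'_quad (h : ℝ) : (vf' h)^2 = tf' h * vf' h + 1 := by
  have := sqrt_sq_add_four (tf' h)
  unfold vf'
  nlinarith [this]

lemma v0_pos : 0 < Real.sqrt (Real.sqrt 2 - 1) := by
  have : (1:ℝ) < Real.sqrt 2 := by
    nlinarith [Real.sq_sqrt (show (0:ℝ) ≤ 2 by norm_num), Real.sqrt_nonneg 2]
  exact Real.sqrt_pos.2 (by linarith)

lemma vf'_zero : vf' 0 = Real.sqrt (Real.sqrt 2 - 1) := by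
  set v0 : ℝ := Real.sqrt (Real.sqrt 2 - 1) with hv0
  have hv0pos := v0_pos
  have hne : v0 ≠ 0 := hv0pos.ne'
  have hsq : Real.sqrt (t0'^2 + 4) = v0 + 1/v0 := by
    have : t0'^2 + 4 = (v0 + 1/v0)^2 := by
      unfold t0'
      rw [← hv0]
      field_simp
      ring
    rw [this, Real.sqrt_sq (by positivity)]
  unfold vf' tf'
  simp only [zero_div, zero_add]
  rw [hsq]
  unfold t0'
  rw [← hv0]
  field_simp
  ring

lemma tf'_hasDerivAt (h : ℝ) : HasDerivAt tf' (1 / (6 * Real.sqrt 3)) h := by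
  have : HasDerivAt (fun x : ℝ => x / (6 * Real.sqrt 3) + t0') (1 / (6 * Real.sqrt 3)) h := by
    simpa using ((hasDerivAt_id h).div_const (6 * Real.sqrt 3)).add_const t0'
  exact this

lemma vf'_hasDerivAt (h : ℝ) :
    HasDerivAt vf' ((1 / (6 * Real.sqrt 3)) * vf' h / Real.sqrt ((tf' h)^2 + 4)) h := by
  have ht := tf'_hasDerivAt h
  have hspos : (0:ℝ) < Real.sqrt ((tf' h)^2 + 4) := Real.sqrt_pos.2 (by positivity)
  have hinner : HasDerivAt (fun x => (tf' x)^2 + 4)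
      (2 * tf' h * (1 / (6 * Real.sqrt 3))) h := by
    have := (ht.pow 2).add_const (4:ℝ)
    simpa [mul_comm, mul_assoc, mul_left_comm] using this
  have hs : HasDerivAt (fun x => Real.sqrt ((tf' x)^2 + 4))
      ((2 * tf' h * (1 / (6 * Real.sqrt 3))) / (2 * Real.sqrt ((tf' h)^2 + 4))) h :=
    hinner.sqrt (by positivity)
  have hv : HasDerivAt vf'
      ((1 / (6 * Real.sqrt 3) + (2 * tf' h * (1 / (6 * Real.sqrt 3))) / (2 * Real.sqrt ((tf' h)^2 + 4))) / 2) h := by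
    exact (ht.add hs).div_const 2
  convert hv using 1
  have hs2 := sqrt_sq_add_four (tf' h)
  unfold vf'
  field_simp
  ring

lemma Yf'_hasDerivAt (h : ℝ) :
    HasDerivAt Yf'
      (4 * (4 * π) * (2 * (1 + (vf' h)^2)) *
        (2 * vf' h * ((1 / (6 * Real.sqrt 3)) * vf' h / Real.sqrt ((tf' h)^2 + 4)))) h := by
  have hv := vf'_hasDerivAt h
  have h1 : HasDerivAt (fun x => 1 + (vf' x)^2)
      (2 * vf' h * ((1 / (6 * Real.sqrt 3)) * vf' h / Real.sqrt ((tf' h)^2 + 4))) h := by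
    have := (hv.pow 2).const_add (1:ℝ)
    simpa [mul_comm, mul_assoc, mul_left_comm] using this
  have h2 := (h1.pow 2).const_mul (4 * (4 * π))
  have : HasDerivAt Yf'
      (4 * (4 * π) * (2 * (1 + (vf' h)^2) ^ 1 *
        (2 * vf' h * ((1 / (6 * Real.sqrt 3)) * vf' h / Real.sqrt ((tf' h)^2 + 4))))) h := by
    exact h2
  convert this using 1
  ring

set_option maxHeartbeats 1000000 in
theorem ode_global_dim_three :
    ∃ Y : ℝ → ℝ,
      Y 0 = 8 * (4 * π) ∧
      (∀ h : ℝ, 0 ≤ h →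
        HasDerivAt Y
          ((4 * (4 * π) * (2 / (3 * Real.sqrt 3))) *
            ((1 / 2) * (Y h / (4 * π)) ^ ((1 : ℝ) / 2) - 1) ^ ((3 : ℝ) / 2)) h) ∧
      ∃ C > 0, ∀ h : ℝ, 0 ≤ h → h ≤ C * (Y h) ^ ((1 : ℝ) / 4) := by
  refine ⟨Yf', ?_, ?_, ?_⟩
  · -- initial condition
    have h2 : (Real.sqrt 2)^2 = 2 := Real.sq_sqrt (by norm_num)
    have h1 : (1:ℝ) ≤ Real.sqrt 2 := by nlinarith [Real.sqrt_nonneg 2]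
    have hv02 : (vf' 0)^2 = Real.sqrt 2 - 1 := by
      rw [vf'_zero, Real.sq_sqrt (by linarith)]
    unfold Yf'
    rw [hv02]
    ring_nf
    nlinarith [h2, pi_pos]
  · -- the ODE
    intro h _
    have hvpos := vf'_pos h
    have hspos : (0:ℝ) < Real.sqrt ((tf' h)^2 + 4) := Real.sqrt_pos.2 (by positivity)
    have hs3 : (0:ℝ) < Real.sqrt 3 := Real.sqrt_pos.2 (by norm_num)
    -- rewrite the RHS
    have hYdiv : Yf' h / (4 * π) = (2 * (1 + (vf' h)^2))^2 := by
      unfold Yf'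
      field_simp [pi_ne_zero]
      ring
    have hrpow1 : (Yf' h / (4 * π)) ^ ((1:ℝ)/2) = 2 * (1 + (vf' h)^2) := by
      rw [hYdiv, ← Real.sqrt_eq_rpow, Real.sqrt_sq (by positivity)]
    have hbracket : (1:ℝ)/2 * (Yf' h / (4 * π)) ^ ((1:ℝ)/2) - 1 = (vf' h)^2 := by
      rw [hrpow1]; ring
    have hrpow2 : ((vf' h)^2 : ℝ) ^ ((3:ℝ)/2) = (vf' h)^3 := by
      rw [← Real.rpow_natCast (vf' h) 2, ← Real.rpow_mul hvpos.le]
      norm_num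
    rw [hbracket, hrpow2]
    have hD := Yf'_hasDerivAt h
    convert hD using 1
    -- key identity: 1 + v² = v * s  where s = √(t²+4) = 2v − t
    have hquad := vf'_quad h
    have hs2 := sqrt_sq_add_four (tf' h)
    have hsv : Real.sqrt ((tf' h)^2 + 4) = 2 * vf' h - tf' h := by
      unfold vf' at *
      nlinarith [hspos]
    have hkey : 1 + (vf' h)^2 = vf' h * Real.sqrt ((tf' h)^2 + 4) := by
      rw [hsv]; nlinarith [hquad]
    have h3 : (Real.sqrt 3)^2 = 3 := Real.sq_sqrt (by norm_num)
    field_simp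
    linear_combination (-6:ℝ) * hkey
  · -- growth bound
    refine ⟨6 * Real.sqrt 6 / (4 * (4 * π)) ^ ((1:ℝ)/4), by positivity, ?_⟩
    intro h hh
    have hvpos := vf'_pos h
    set v := vf' h with hv
    -- Y^{1/4} = (4ω₂)^{1/4} * √(1+v²)
    have hbase : (0:ℝ) < 4 * (4 * π) := by positivity
    have hY4 : (Yf' h) ^ ((1:ℝ)/4) =
        (4 * (4 * π)) ^ ((1:ℝ)/4) * Real.sqrt (1 + v^2) := by
      unfold Yf'
      rw [Real.mul_rpow hbase.le (by positivity)]
      congr 1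
      rw [← Real.rpow_natCast (1 + v^2) 2, ← Real.rpow_mul (by positivity),
        Real.sqrt_eq_rpow]
      norm_num
    rw [hY4]
    have hcancel : 6 * Real.sqrt 6 / (4 * (4 * π)) ^ ((1:ℝ)/4) *
        ((4 * (4 * π)) ^ ((1:ℝ)/4) * Real.sqrt (1 + v^2)) =
        6 * Real.sqrt 6 * Real.sqrt (1 + v^2) := by
      have : (4 * (4 * π)) ^ ((1:ℝ)/4) ≠ 0 := (Real.rpow_pos_of_pos hbase _).ne'
      field_simp
    rw [hcancel]
    -- h ≤ 6√3 (v + 1) ≤ 6√6 √(1+v²)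
    have hs3 : (0:ℝ) < Real.sqrt 3 := Real.sqrt_pos.2 (by norm_num)
    have h3 : (Real.sqrt 3)^2 = 3 := Real.sq_sqrt (by norm_num)
    -- t ≤ v
    have htv : tf' h ≤ v := by
      have h1 : |tf' h| ≤ Real.sqrt ((tf' h)^2 + 4) := by
        rw [← Real.sqrt_sq_eq_abs]
        exact Real.sqrt_le_sqrt (by nlinarith)
      have h2 : tf' h ≤ |tf' h| := le_abs_self _
      rw [hv]; unfold vf'
      linarith
    -- -t0' ≤ 1
    have ht0 : -t0' ≤ 1 := by
      have hv0pos := v0_pos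
      set v0 : ℝ := Real.sqrt (Real.sqrt 2 - 1)
      have h2 : (Real.sqrt 2)^2 = 2 := Real.sq_sqrt (by norm_num)
      have h1 : (1:ℝ) ≤ Real.sqrt 2 := by nlinarith [Real.sqrt_nonneg 2]
      have hv02 : v0^2 = Real.sqrt 2 - 1 := Real.sq_sqrt (by linarith)
      have hsqrt2lb : (7:ℝ)/5 ≤ Real.sqrt 2 := by
        rw [show ((7:ℝ)/5 ≤ Real.sqrt 2) ↔ ((7:ℝ)/5)^2 ≤ 2 from Real.le_sqrt (by norm_num) (by norm_num)]
        norm_num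
      have hlow : 2 - Real.sqrt 2 ≤ v0 := by
        have hub : Real.sqrt 2 ≤ 2 := by nlinarith [h2, Real.sqrt_nonneg 2]
        rw [show v0 = Real.sqrt (Real.sqrt 2 - 1) from rfl,
          Real.le_sqrt (by linarith) (by linarith)]
        nlinarith [h2]
      unfold t0'
      have : -(v0 - 1/v0) = (1 - v0^2)/v0 := by field_simp; ring
      rw [this]
      rw [div_le_one hv0pos]
      nlinarith [hv02, h2, hlow, hsqrt2lb]
    -- so h = 6√3 (t - t0) ≤ 6√3 (v + 1)
    have hh1 : h ≤ 6 * Real.sqrt 3 * (v + 1) := by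
      have ht : tf' h = h / (6 * Real.sqrt 3) + t0' := rfl
      have heq : h = 6 * Real.sqrt 3 * (tf' h - t0') := by
        rw [ht]; field_simp; ring
      have m1 := mul_le_mul_of_nonneg_left htv (show (0:ℝ) ≤ 6 * Real.sqrt 3 by positivity)
      have m2 := mul_le_mul_of_nonneg_left ht0 (show (0:ℝ) ≤ 6 * Real.sqrt 3 by positivity)
      nlinarith [heq, m1, m2]
    -- v + 1 ≤ √2 √(1+v²), so 6√3(v+1) ≤ 6√6 √(1+v²)
    have hh2 : Real.sqrt 3 * (v + 1) ≤ Real.sqrt 6 * Real.sqrt (1 + v^2) := by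
      have e1 : Real.sqrt 6 * Real.sqrt (1 + v^2) = Real.sqrt (6 * (1 + v^2)) := by
        rw [← Real.sqrt_mul (by norm_num)]
      have e2 : Real.sqrt 3 * (v + 1) = Real.sqrt (3 * (v+1)^2) := by
        rw [Real.sqrt_mul (by norm_num), Real.sqrt_sq (by positivity)]
      rw [e1, e2]
      apply Real.sqrt_le_sqrt
      nlinarith [sq_nonneg (v - 1)]
    linarith [hh1, hh2, mul_le_mul_of_nonneg_left hh2 (show (0:ℝ) ≤ 6 by norm_num)]
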